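/- Let n ≥ 2, let T be a partition of {1,…,n} into k ≥ 2 blocks, and let c ∈ ℝ. If for every n×n complex positive semidefinite matrix A with nonnegative real entries the matrix f_T[A] (entries a_{ij} within a block, c·a_{ij} across blocks) is positive semidefinite, then c ∈ [−1/(k−1), 1]. -/

import Mathlib

open scoped ComplexOrder

lemma aux_psd {n : ℕ} (v : Fin n → ℂ) (hv : ∀ i, star (v i) = v i) :
    (Matrix.of fun i j => v i * v j : Matrix (Fin n) (Fin n) ℂ).PosSemidef := by
  have heq : (Matrix.of fun i j => v i * v j : Matrix (Fin n) (Fin n) ℂ)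
      = Matrix.conjTranspose (Matrix.replicateRow Unit v) * Matrix.replicateRow Unit v := by
    ext i j
    simp [Matrix.mul_apply, Matrix.conjTranspose_apply, hv i]
  rw [heq]
  exact Matrix.posSemidef_conjTranspose_mul_self _

theorem partition_scale_posSemidef_necessity (n k : ℕ) (hn : 2 ≤ n) (hk : 2 ≤ k)
    (π : Fin n → Fin k) (hπ : Function.Surjective π) (c : ℝ)
    (h : ∀ A : Matrix (Fin n) (Fin n) ℂ, A.PosSemidef →
      (∀ i j, (A i j).im = 0 ∧ 0 ≤ (A i j).re) →
      (Matrix.of fun i j => if π i = π j then A i j else (c : ℂ) * A i j).PosSemidef) :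
    c ∈ Set.Icc (-1 / (k - 1) : ℝ) 1 := by
  have hk1 : (0:ℝ) < (k:ℝ) - 1 := by
    have : (2:ℝ) ≤ k := by exact_mod_cast hk
    linarith
  -- Upper bound via all-ones matrix
  have hub : c ≤ 1 := by
    have hJpsd : (Matrix.of fun _ _ => (1:ℂ) : Matrix (Fin n) (Fin n) ℂ).PosSemidef := by
      simpa using aux_psd (n := n) (fun _ => 1) (fun _ => by simp)
    have hM := h _ hJpsd (fun i j => by simp)
    obtain ⟨i0, hi0⟩ := hπ ⟨0, by omega⟩
    obtain ⟨j0, hj0⟩ := hπ ⟨1, by omega⟩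
    have hne : π i0 ≠ π j0 := by
      rw [hi0, hj0]; simp [Fin.ext_iff]
    have hij : i0 ≠ j0 := fun hh => hne (by rw [hh])
    set x : Fin n → ℂ := fun i => (if i = i0 then 1 else 0) - (if i = j0 then 1 else 0) with hx
    have hq := hM.dotProduct_mulVec_nonneg x
    have hval : dotProduct (star x)
        ((Matrix.of fun i j => if π i = π j then (Matrix.of fun _ _ => (1:ℂ) : Matrix (Fin n) (Fin n) ℂ) i j else (c:ℂ) * (Matrix.of fun _ _ => (1:ℂ) : Matrix (Fin n) (Fin n) ℂ) i j).mulVec x)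
        = ((2 - 2*c : ℝ) : ℂ) := by
      have hpair : ∀ (g : Fin n → ℂ), (∀ x, x ≠ i0 → x ≠ j0 → g x = 0) →
          ∑ x, g x = g i0 + g j0 := fun g hg =>
        Finset.sum_eq_add_of_mem i0 j0 (Finset.mem_univ _) (Finset.mem_univ _) hij
          (fun x _ hx => hg x hx.1 hx.2)
      simp only [dotProduct, Matrix.mulVec, Pi.star_apply, hx, Matrix.of_apply,
        star_sub, star_one, star_zero, mul_sub, sub_mul, mul_ite, mul_one, mul_zero,
        ite_mul, zero_mul, one_mul, apply_ite (star : ℂ → ℂ), Finset.sum_sub_distrib,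
        Finset.sum_ite_eq', Finset.mem_univ, if_true]
      rw [hpair _ (fun x hx1 hx2 => by simp [hx1, hx2]),
        hpair _ (fun x hx1 hx2 => by simp [hx1, hx2])]
      simp [hne, hne.symm, hij, hij.symm]
      push_cast
      ring
    rw [hval] at hq
    have : (0:ℝ) ≤ 2 - 2*c := by exact_mod_cast hq
    linarith
  refine ⟨?_, hub⟩
  -- Lower bound via indicator of a transversal
  set s : Fin k → Fin n := Function.surjInv hπ with hs
  have hsinj : Function.Injective s := Function.injective_surjInv hπ
  have hπs : ∀ t, π (s t) = t := fun t => Function.surjInv_eq hπ t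
  set S : Finset (Fin n) := Finset.image s Finset.univ with hS
  set v : Fin n → ℂ := fun i => if i ∈ S then 1 else 0 with hv
  have hvstar : ∀ i, star (v i) = v i := fun i => by
    simp [hv, apply_ite star]
  have hApsd := aux_psd v hvstar
  have hent : ∀ i j, ((Matrix.of fun i j => v i * v j : Matrix (Fin n) (Fin n) ℂ) i j).im = 0
      ∧ 0 ≤ ((Matrix.of fun i j => v i * v j : Matrix (Fin n) (Fin n) ℂ) i j).re := by
    intro i j
    simp only [Matrix.of_apply, hv]
    by_cases hi : i ∈ S <;> by_cases hj : j ∈ S <;> simp [hi, hj]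
  have hM := h _ hApsd hent
  have hq := hM.dotProduct_mulVec_nonneg (fun _ => 1)
  -- pointwise identity
  have key : ∀ i j, (if π i = π j then v i * v j else (c:ℂ) * (v i * v j))
      = (c:ℂ) * (v i * v j) + (1 - (c:ℂ)) * (if i = j then v i else 0) := by
    intro i j
    by_cases hij : i = j
    · subst hij
      have hvv : v i * v i = v i := by by_cases hi : i ∈ S <;> simp [hv, hi]
      simp [hvv]; ring
    · rw [if_neg hij]
      by_cases hi : i ∈ S
      · by_cases hj : j ∈ S
        · obtain ⟨t, _, rfl⟩ := Finset.mem_image.mp hi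
          obtain ⟨t', _, rfl⟩ := Finset.mem_image.mp hj
          have : π (s t) ≠ π (s t') := by
            rw [hπs, hπs]; intro hh; exact hij (by rw [hh])
          rw [if_neg this]
          ring
        · simp [hv, hj]
      · simp [hv, hi]
  have hsum : ∑ i, v i = (k:ℂ) := by
    rw [hv]
    simp only []
    rw [Finset.sum_ite_mem, Finset.univ_inter, Finset.sum_const, hS,
      Finset.card_image_of_injective _ hsinj]
    simp
  have hval : dotProduct (star (fun _ => (1:ℂ)))
      ((Matrix.of fun i j => if π i = π j then (Matrix.of fun i j => v i * v j : Matrix (Fin n) (Fin n) ℂ) i j else (c:ℂ) * (Matrix.of fun i j => v i * v j : Matrix (Fin n) (Fin n) ℂ) i j).mulVec (fun _ => 1))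
      = ((c * k^2 + (1-c)*k : ℝ) : ℂ) := by
    simp only [dotProduct, Matrix.mulVec, Pi.star_apply, star_one, one_mul, mul_one,
      Matrix.of_apply]
    calc ∑ i, ∑ j, (if π i = π j then v i * v j else (c:ℂ) * (v i * v j))
        = ∑ i, ∑ j, ((c:ℂ) * (v i * v j) + (1 - (c:ℂ)) * (if i = j then v i else 0)) := by
          exact Finset.sum_congr rfl fun i _ => Finset.sum_congr rfl fun j _ => key i j
      _ = (c:ℂ) * ((∑ i, v i) * (∑ j, v j)) + (1 - (c:ℂ)) * (∑ i, v i) := by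
          simp [Finset.sum_add_distrib, Finset.mul_sum, Finset.sum_mul, Finset.sum_ite_eq',
            mul_comm, mul_assoc, mul_left_comm]
      _ = ((c * k^2 + (1-c)*k : ℝ) : ℂ) := by rw [hsum]; push_cast; ring
  rw [hval] at hq
  have hr : (0:ℝ) ≤ c * k^2 + (1-c)*k := by exact_mod_cast hq
  rw [div_le_iff₀ hk1]
  nlinarith [hr, hk1]
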